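/- Write σ₃ = σ₁σ₂. There exist orthogonal matrices U₁,…,U₆ ∈ O(4,ℝ), each normalizing the subgroup E(2) of O(4,ℝ), such that: U₁⁻¹(σ₃⊗σ₃)U₁ = σ₂⊗σ₁; U₂⁻¹(σ₁⊗σ₁)U₂ = 1₂⊗σ₁; U₃⁻¹(σ₂⊗σ₁)U₃ = 1₂⊗σ₁; U₄⁻¹(σ₂⊗σ₂)U₄ = σ₂⊗1₂; U₅⁻¹(σ₁⊗1₂)U₅ = σ₂⊗1₂ and U₅⁻¹(σ₁⊗σ₁)U₅ = σ₂⊗σ₂; U₆⁻¹(σ₃⊗σ₂)U₆ = σ₃⊗1₂. -/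

import Mathlib

open Matrix

/-- The type of `2^m × 2^m` real matrices, with rows and columns indexed by `𝔽₂^m`. -/
abbrev EMat (m : ℕ) := Matrix (Fin m → Fin 2) (Fin m → Fin 2) ℝ

/-- `pauliR 0 = 1₂`, `pauliR 1 = σ₁`, `pauliR 2 = σ₂`, `pauliR 3 = σ₃ = σ₁ σ₂`. -/
noncomputable def pauliR : Fin 4 → Matrix (Fin 2) (Fin 2) ℝ :=
  ![1, !![0, 1; 1, 0], !![1, 0; 0, -1], !![0, 1; 1, 0] * !![1, 0; 0, -1]]

/-- The Kronecker (tensor) product of `m` matrices of size `2 × 2`. -/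
noncomputable def kprod (m : ℕ) (f : Fin m → Matrix (Fin 2) (Fin 2) ℝ) : EMat m :=
  Matrix.of fun i j => ∏ a, f a (i a) (j a)

/-- The extraspecial group `E(m) = 2_+^{2m+1}`, realized as the set of matrices
`± σ_{i₁} ⊗ ⋯ ⊗ σ_{iₘ}` with each factor in `{1₂, σ₁, σ₂, σ₁σ₂}`. -/
noncomputable def Esp (m : ℕ) : Finset (EMat m) :=
  @Finset.image _ _ (Classical.decEq _)
    (fun p : Bool × (Fin m → Fin 4) =>
      (if p.1 then (-1 : EMat m) else 1) * kprod m fun b => pauliR (p.2 b))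
    Finset.univ

/-- `k2 x y = σ_x ⊗ σ_y` as a `4 × 4` real matrix. -/
noncomputable def k2 (x y : Fin 4) : EMat 2 := kprod 2 fun b => pauliR (![x, y] b)

/-- `U` is orthogonal and lies in the normalizer of `E(2)` in `O(4, ℝ)`. -/
def inNormE2 (U : EMat 2) : Prop :=
  U * Uᵀ = 1 ∧ Uᵀ * U = 1 ∧ ∀ h : EMat 2, h ∈ Esp 2 ↔ U * h * Uᵀ ∈ Esp 2


namespace Esp2Aux

def eFun : (Fin 2 → Fin 2) → Fin 4 :=
  fun f => (⟨(f 0 : ℕ) + 2 * (f 1 : ℕ), by have := (f 0).isLt; have := (f 1).isLt; omega⟩ : Fin 4)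

noncomputable def E4 : (Fin 2 → Fin 2) ≃ Fin 4 := Equiv.ofBijective eFun (by decide)

def d0 : Fin 4 → Fin 2 := ![0, 1, 0, 1]
def d1 : Fin 4 → Fin 2 := ![0, 0, 1, 1]

lemma d0_E : ∀ f, d0 (E4 f) = f 0 := by decide
lemma d1_E : ∀ f, d1 (E4 f) = f 1 := by decide

noncomputable def m4 (A : Matrix (Fin 4) (Fin 4) ℝ) : EMat 2 := A.submatrix E4 E4
lemma m4_mul (A B : Matrix (Fin 4) (Fin 4) ℝ) : m4 A * m4 B = m4 (A * B) :=
  Matrix.submatrix_mul_equiv A B _ E4 _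
lemma m4_one : m4 1 = 1 := Matrix.submatrix_one_equiv E4
lemma m4_transpose (A : Matrix (Fin 4) (Fin 4) ℝ) : (m4 A)ᵀ = m4 Aᵀ :=
  Matrix.transpose_submatrix A _ _
lemma m4_smul (r : ℝ) (A : Matrix (Fin 4) (Fin 4) ℝ) : m4 (r • A) = r • m4 A := rfl

lemma pauliR_eq : pauliR = ![!![1,0;0,1], !![0,1;1,0], !![1,0;0,-1], !![0,-1;1,0]] := by
  funext x
  fin_cases x <;> simp [pauliR, Matrix.one_fin_two, Matrix.mul_fin_two]

def psgnB (x z : Fin 4) : Bool := (2 ≤ x) && (z == 1 || z == 3)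
def pmul : Fin 4 → Fin 4 → Fin 4 :=
  ![![0,1,2,3],![1,0,3,2],![2,3,0,1],![3,2,1,0]]
noncomputable def sgn (s : Bool) : ℝ := if s then -1 else 1

lemma sgn_mul (s t : Bool) : sgn s * sgn t = sgn (xor s t) := by
  cases s <;> cases t <;> norm_num [sgn]

lemma pauliR_mul (x z : Fin 4) : pauliR x * pauliR z = sgn (psgnB x z) • pauliR (pmul x z) := by
  fin_cases x <;> fin_cases z <;>
    ext i j <;> fin_cases i <;> fin_cases j <;>
      simp [pauliR_eq, pmul, psgnB, sgn, Matrix.mul_apply, Fin.sum_univ_two]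

lemma k2_apply (x y : Fin 4) (f g : Fin 2 → Fin 2) :
    k2 x y f g = pauliR x (f 0) (g 0) * pauliR y (f 1) (g 1) := by
  simp [k2, kprod, Fin.prod_univ_two]

lemma kprod_mul (m : ℕ) (f g : Fin m → Matrix (Fin 2) (Fin 2) ℝ) :
    kprod m f * kprod m g = kprod m fun a => f a * g a := by
  ext i j
  simp only [kprod, Matrix.mul_apply, Matrix.of_apply]
  have h := Finset.prod_univ_sum (t := fun _ : Fin m => (Finset.univ : Finset (Fin 2)))
    (f := fun a t => f a (i a) t * g a t (j a))
  rw [Fintype.piFinset_univ] at h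
  simp_rw [← Finset.prod_mul_distrib]
  exact h.symm

/-- `KK x y` is `k2 x y` written as a `Fin 4`-indexed matrix. -/
noncomputable def KK (x y : Fin 4) : Matrix (Fin 4) (Fin 4) ℝ :=
  Matrix.of fun i j => pauliR x (d0 i) (d0 j) * pauliR y (d1 i) (d1 j)

lemma k2_m4 (x y : Fin 4) : k2 x y = m4 (KK x y) := by
  ext f g
  rw [k2_apply]
  simp [m4, KK, d0_E, d1_E]

lemma conj_eq {M N : Matrix (Fin 4) (Fin 4) ℝ} {s : Bool} {x y a b : Fin 4}
    (h : M * KK x y * N = sgn s • KK a b) :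
    m4 M * k2 x y * m4 N = sgn s • k2 a b := by
  rw [k2_m4, k2_m4, m4_mul, m4_mul, h, m4_smul]

lemma k2_mul (x y z w : Fin 4) :
    k2 x y * k2 z w = sgn (xor (psgnB x z) (psgnB y w)) • k2 (pmul x z) (pmul y w) := by
  unfold k2
  rw [kprod_mul]
  have h : (fun a => pauliR (![x,y] a) * pauliR (![z,w] a))
      = fun a => (![sgn (psgnB x z), sgn (psgnB y w)] a) • pauliR (![pmul x z, pmul y w] a) := by
    funext a; fin_cases a <;> simp [pauliR_mul]
  rw [h]
  have h2 : kprod 2 (fun a => (![sgn (psgnB x z), sgn (psgnB y w)] a)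
        • pauliR (![pmul x z, pmul y w] a))
      = (sgn (psgnB x z) * sgn (psgnB y w))
        • kprod 2 (fun a => pauliR (![pmul x z, pmul y w] a)) := by
    ext i j
    simp [kprod, Fin.prod_univ_two]
    ring
  rw [h2, sgn_mul]

lemma k2_zero : k2 0 0 = 1 := by
  rw [k2_m4]
  have h : KK 0 0 = 1 := by
    ext i j
    fin_cases i <;> fin_cases j <;>
      norm_num [KK, d0, d1, pauliR_eq, Matrix.one_apply, Fin.ext_iff]
  rw [h, m4_one]

lemma mem_Esp_iff {h : EMat 2} :
    h ∈ Esp 2 ↔ ∃ (s : Bool) (x y : Fin 4), h = sgn s • k2 x y := by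
  classical
  constructor
  · intro hh
    rw [Esp, @Finset.mem_image _ _ (Classical.decEq _)] at hh
    obtain ⟨⟨s, v⟩, -, rfl⟩ := hh
    refine ⟨s, v 0, v 1, ?_⟩
    have hv : (fun b => pauliR (v b)) = fun b => pauliR (![v 0, v 1] b) := by
      funext b; fin_cases b <;> simp
    cases s <;> simp [k2, hv, sgn]
  · rintro ⟨s, x, y, rfl⟩
    rw [Esp, @Finset.mem_image _ _ (Classical.decEq _)]
    refine ⟨(s, ![x, y]), Finset.mem_univ _, ?_⟩
    cases s <;> simp [k2, sgn]

/-- conjugation data for all of `k2` -/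
def GoodConj (U : EMat 2) : Prop :=
  ∀ x y : Fin 4, ∃ (s : Bool) (a b : Fin 4), U * k2 x y * U = sgn s • k2 a b

lemma goodConj_of_gen {U : EMat 2} (hU : U * U = 1)
    (h1 : ∀ x : Fin 4, ∃ (s : Bool) (a b : Fin 4), U * k2 x 0 * U = sgn s • k2 a b)
    (h2 : ∀ y : Fin 4, ∃ (s : Bool) (a b : Fin 4), U * k2 0 y * U = sgn s • k2 a b) :
    GoodConj U := by
  intro x y
  obtain ⟨s, a, b, hs⟩ := h1 x
  obtain ⟨t, c, d, ht⟩ := h2 y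
  have hdecomp : k2 x y = k2 x 0 * k2 0 y := by
    rw [k2_mul]
    have e1 : psgnB x 0 = false := by simp [psgnB]
    have e2 : psgnB (0 : Fin 4) y = false := by
      simp [psgnB]
    have e3 : pmul x 0 = x := by fin_cases x <;> rfl
    have e4 : pmul 0 y = y := by fin_cases y <;> rfl
    rw [e1, e2, e3, e4]
    simp [sgn]
  have key : U * k2 x y * U = (U * k2 x 0 * U) * (U * k2 0 y * U) := by
    rw [hdecomp]
    have : (U * k2 x 0 * U) * (U * k2 0 y * U)
        = U * (k2 x 0 * ((U * U) * (k2 0 y * U))) := by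
      simp only [mul_assoc]
    rw [this, hU, one_mul]
    simp only [mul_assoc]
  rw [key, hs, ht, smul_mul_smul_comm, sgn_mul, k2_mul]
  exact ⟨xor (xor s t) (xor (psgnB a c) (psgnB b d)), pmul a c, pmul b d, by
    rw [smul_smul, sgn_mul]⟩

lemma conj_mem {U : EMat 2} (hG : GoodConj U) : ∀ h ∈ Esp 2, U * h * U ∈ Esp 2 := by
  intro h hh
  rw [mem_Esp_iff] at hh ⊢
  obtain ⟨s, x, y, rfl⟩ := hh
  obtain ⟨t, a, b, ht⟩ := hG x y
  refine ⟨xor s t, a, b, ?_⟩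
  have e : U * (sgn s • k2 x y) * U = sgn s • (U * k2 x y * U) := by
    rw [Matrix.mul_smul, Matrix.smul_mul]
  rw [e, ht, smul_smul, sgn_mul]

lemma inNorm_of {U : EMat 2} (hsym : Uᵀ = U) (hU : U * U = 1) (hG : GoodConj U) :
    inNormE2 U := by
  refine ⟨by rw [hsym]; exact hU, by rw [hsym]; exact hU, fun h => ?_⟩
  rw [hsym]
  constructor
  · exact fun hh => conj_mem hG h hh
  · intro hh
    have h2 := conj_mem hG _ hh
    have e : U * (U * h * U) * U = h := by
      calc U * (U * h * U) * U = (U * U) * h * (U * U) := by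
            simp only [mul_assoc]
        _ = h := by rw [hU, one_mul, mul_one]
    rwa [e] at h2





noncomputable def MA : Matrix (Fin 4) (Fin 4) ℝ := !![1,0,0,0; 0,1,0,0; 0,0,0,1; 0,0,1,0]
noncomputable def MB : Matrix (Fin 4) (Fin 4) ℝ := !![1,0,0,0; 0,1,0,0; 0,0,1,0; 0,0,0,-1]
noncomputable def NC : Matrix (Fin 4) (Fin 4) ℝ := !![1,1,1,1; 1,-1,1,-1; 1,1,-1,-1; 1,-1,-1,1]
noncomputable def MC : Matrix (Fin 4) (Fin 4) ℝ := (2:ℝ)⁻¹ • NC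

lemma KK00 : KK 0 0 = !![1,0,0,0; 0,1,0,0; 0,0,1,0; 0,0,0,1] := by
  ext i j
  fin_cases i <;> fin_cases j <;>
    norm_num [KK, d0, d1, pauliR_eq, Matrix.vecHead, Matrix.vecTail]

lemma KK01 : KK 0 1 = !![0,0,1,0; 0,0,0,1; 1,0,0,0; 0,1,0,0] := by
  ext i j
  fin_cases i <;> fin_cases j <;>
    norm_num [KK, d0, d1, pauliR_eq, Matrix.vecHead, Matrix.vecTail]

lemma KK02 : KK 0 2 = !![1,0,0,0; 0,1,0,0; 0,0,-1,0; 0,0,0,-1] := by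
  ext i j
  fin_cases i <;> fin_cases j <;>
    norm_num [KK, d0, d1, pauliR_eq, Matrix.vecHead, Matrix.vecTail] <;> simp

lemma KK03 : KK 0 3 = !![0,0,-1,0; 0,0,0,-1; 1,0,0,0; 0,1,0,0] := by
  ext i j
  fin_cases i <;> fin_cases j <;>
    norm_num [KK, d0, d1, pauliR_eq, Matrix.vecHead, Matrix.vecTail] <;> simp

lemma KK10 : KK 1 0 = !![0,1,0,0; 1,0,0,0; 0,0,0,1; 0,0,1,0] := by
  ext i j
  fin_cases i <;> fin_cases j <;>
    norm_num [KK, d0, d1, pauliR_eq, Matrix.vecHead, Matrix.vecTail]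

lemma KK11 : KK 1 1 = !![0,0,0,1; 0,0,1,0; 0,1,0,0; 1,0,0,0] := by
  ext i j
  fin_cases i <;> fin_cases j <;>
    norm_num [KK, d0, d1, pauliR_eq, Matrix.vecHead, Matrix.vecTail]

lemma KK12 : KK 1 2 = !![0,1,0,0; 1,0,0,0; 0,0,0,-1; 0,0,-1,0] := by
  ext i j
  fin_cases i <;> fin_cases j <;>
    norm_num [KK, d0, d1, pauliR_eq, Matrix.vecHead, Matrix.vecTail] <;> simp

lemma KK13 : KK 1 3 = !![0,0,0,-1; 0,0,-1,0; 0,1,0,0; 1,0,0,0] := by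
  ext i j
  fin_cases i <;> fin_cases j <;>
    norm_num [KK, d0, d1, pauliR_eq, Matrix.vecHead, Matrix.vecTail] <;> simp

lemma KK20 : KK 2 0 = !![1,0,0,0; 0,-1,0,0; 0,0,1,0; 0,0,0,-1] := by
  ext i j
  fin_cases i <;> fin_cases j <;>
    norm_num [KK, d0, d1, pauliR_eq, Matrix.vecHead, Matrix.vecTail] <;> simp

lemma KK21 : KK 2 1 = !![0,0,1,0; 0,0,0,-1; 1,0,0,0; 0,-1,0,0] := by
  ext i j
  fin_cases i <;> fin_cases j <;>
    norm_num [KK, d0, d1, pauliR_eq, Matrix.vecHead, Matrix.vecTail] <;> simp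

lemma KK22 : KK 2 2 = !![1,0,0,0; 0,-1,0,0; 0,0,-1,0; 0,0,0,1] := by
  ext i j
  fin_cases i <;> fin_cases j <;>
    norm_num [KK, d0, d1, pauliR_eq, Matrix.vecHead, Matrix.vecTail] <;> simp

lemma KK23 : KK 2 3 = !![0,0,-1,0; 0,0,0,1; 1,0,0,0; 0,-1,0,0] := by
  ext i j
  fin_cases i <;> fin_cases j <;>
    norm_num [KK, d0, d1, pauliR_eq, Matrix.vecHead, Matrix.vecTail] <;> simp

lemma KK30 : KK 3 0 = !![0,-1,0,0; 1,0,0,0; 0,0,0,-1; 0,0,1,0] := by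
  ext i j
  fin_cases i <;> fin_cases j <;>
    norm_num [KK, d0, d1, pauliR_eq, Matrix.vecHead, Matrix.vecTail] <;> simp

lemma KK31 : KK 3 1 = !![0,0,0,-1; 0,0,1,0; 0,-1,0,0; 1,0,0,0] := by
  ext i j
  fin_cases i <;> fin_cases j <;>
    norm_num [KK, d0, d1, pauliR_eq, Matrix.vecHead, Matrix.vecTail] <;> simp

lemma KK32 : KK 3 2 = !![0,-1,0,0; 1,0,0,0; 0,0,0,1; 0,0,-1,0] := by
  ext i j
  fin_cases i <;> fin_cases j <;>
    norm_num [KK, d0, d1, pauliR_eq, Matrix.vecHead, Matrix.vecTail] <;> simp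

lemma KK33 : KK 3 3 = !![0,0,0,1; 0,0,-1,0; 0,-1,0,0; 1,0,0,0] := by
  ext i j
  fin_cases i <;> fin_cases j <;>
    norm_num [KK, d0, d1, pauliR_eq, Matrix.vecHead, Matrix.vecTail] <;> simp

lemma MA_sq : MA * MA = 1 := by
  rw [← Matrix.ext_iff]
  simp only [Fin.forall_fin_succ, Fin.forall_fin_one, Matrix.mul_apply, Fin.sum_univ_succ,
    Finset.univ_eq_empty, Finset.sum_empty, Matrix.cons_val_zero, Matrix.cons_val_succ,
    Matrix.smul_apply, MA, MB, NC, Matrix.cons_val', Matrix.vecHead, Matrix.vecTail,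
    Function.comp, Matrix.cons_val_fin_one, Fin.succ_zero_eq_one, smul_eq_mul, sgn,
    Matrix.one_apply, Matrix.transpose_apply]
  norm_num [Matrix.vecHead, Matrix.vecTail, Fin.ext_iff] <;> simp [Fin.ext_iff] <;> norm_num

lemma MA_symm : MAᵀ = MA := by
  rw [← Matrix.ext_iff]
  simp only [Fin.forall_fin_succ, Fin.forall_fin_one, Matrix.mul_apply, Fin.sum_univ_succ,
    Finset.univ_eq_empty, Finset.sum_empty, Matrix.cons_val_zero, Matrix.cons_val_succ,
    Matrix.smul_apply, MA, MB, NC, Matrix.cons_val', Matrix.vecHead, Matrix.vecTail,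
    Function.comp, Matrix.cons_val_fin_one, Fin.succ_zero_eq_one, smul_eq_mul, sgn,
    Matrix.one_apply, Matrix.transpose_apply]
  norm_num [Matrix.vecHead, Matrix.vecTail, Fin.ext_iff] <;> simp [Fin.ext_iff] <;> norm_num

lemma MB_sq : MB * MB = 1 := by
  rw [← Matrix.ext_iff]
  simp only [Fin.forall_fin_succ, Fin.forall_fin_one, Matrix.mul_apply, Fin.sum_univ_succ,
    Finset.univ_eq_empty, Finset.sum_empty, Matrix.cons_val_zero, Matrix.cons_val_succ,
    Matrix.smul_apply, MA, MB, NC, Matrix.cons_val', Matrix.vecHead, Matrix.vecTail,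
    Function.comp, Matrix.cons_val_fin_one, Fin.succ_zero_eq_one, smul_eq_mul, sgn,
    Matrix.one_apply, Matrix.transpose_apply]
  norm_num [Matrix.vecHead, Matrix.vecTail, Fin.ext_iff] <;> simp [Fin.ext_iff] <;> norm_num

lemma MB_symm : MBᵀ = MB := by
  rw [← Matrix.ext_iff]
  simp only [Fin.forall_fin_succ, Fin.forall_fin_one, Matrix.mul_apply, Fin.sum_univ_succ,
    Finset.univ_eq_empty, Finset.sum_empty, Matrix.cons_val_zero, Matrix.cons_val_succ,
    Matrix.smul_apply, MA, MB, NC, Matrix.cons_val', Matrix.vecHead, Matrix.vecTail,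
    Function.comp, Matrix.cons_val_fin_one, Fin.succ_zero_eq_one, smul_eq_mul, sgn,
    Matrix.one_apply, Matrix.transpose_apply]
  norm_num [Matrix.vecHead, Matrix.vecTail, Fin.ext_iff] <;> simp [Fin.ext_iff] <;> norm_num

lemma NC_sq : NC * NC = (4:ℝ) • 1 := by
  rw [← Matrix.ext_iff]
  simp only [Fin.forall_fin_succ, Fin.forall_fin_one, Matrix.mul_apply, Fin.sum_univ_succ,
    Finset.univ_eq_empty, Finset.sum_empty, Matrix.cons_val_zero, Matrix.cons_val_succ,
    Matrix.smul_apply, MA, MB, NC, Matrix.cons_val', Matrix.vecHead, Matrix.vecTail,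
    Function.comp, Matrix.cons_val_fin_one, Fin.succ_zero_eq_one, smul_eq_mul, sgn,
    Matrix.one_apply, Matrix.transpose_apply]
  norm_num [Matrix.vecHead, Matrix.vecTail, Fin.ext_iff] <;> simp [Fin.ext_iff] <;> norm_num

lemma NC_symm : NCᵀ = NC := by
  rw [← Matrix.ext_iff]
  simp only [Fin.forall_fin_succ, Fin.forall_fin_one, Matrix.mul_apply, Fin.sum_univ_succ,
    Finset.univ_eq_empty, Finset.sum_empty, Matrix.cons_val_zero, Matrix.cons_val_succ,
    Matrix.smul_apply, MA, MB, NC, Matrix.cons_val', Matrix.vecHead, Matrix.vecTail,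
    Function.comp, Matrix.cons_val_fin_one, Fin.succ_zero_eq_one, smul_eq_mul, sgn,
    Matrix.one_apply, Matrix.transpose_apply]
  norm_num [Matrix.vecHead, Matrix.vecTail, Fin.ext_iff] <;> simp [Fin.ext_iff] <;> norm_num

lemma MC_sq : MC * MC = 1 := by
  rw [MC, Matrix.smul_mul, Matrix.mul_smul, smul_smul, NC_sq, smul_smul]
  norm_num

lemma MC_symm : MCᵀ = MC := by
  rw [MC, Matrix.transpose_smul, NC_symm]

lemma MA_c10 : MA * KK 1 0 * MA = sgn false • KK 1 0 := by
  rw [KK10]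
  rw [← Matrix.ext_iff]
  simp only [Fin.forall_fin_succ, Fin.forall_fin_one, Matrix.mul_apply, Fin.sum_univ_succ,
    Finset.univ_eq_empty, Finset.sum_empty, Matrix.cons_val_zero, Matrix.cons_val_succ,
    Matrix.smul_apply, MA, MB, NC, Matrix.cons_val', Matrix.vecHead, Matrix.vecTail,
    Function.comp, Matrix.cons_val_fin_one, Fin.succ_zero_eq_one, smul_eq_mul, sgn,
    Matrix.one_apply, Matrix.transpose_apply]
  norm_num [Matrix.vecHead, Matrix.vecTail, Fin.ext_iff] <;> simp [Fin.ext_iff] <;> norm_num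

lemma MA_c20 : MA * KK 2 0 * MA = sgn false • KK 2 2 := by
  rw [KK20, KK22]
  rw [← Matrix.ext_iff]
  simp only [Fin.forall_fin_succ, Fin.forall_fin_one, Matrix.mul_apply, Fin.sum_univ_succ,
    Finset.univ_eq_empty, Finset.sum_empty, Matrix.cons_val_zero, Matrix.cons_val_succ,
    Matrix.smul_apply, MA, MB, NC, Matrix.cons_val', Matrix.vecHead, Matrix.vecTail,
    Function.comp, Matrix.cons_val_fin_one, Fin.succ_zero_eq_one, smul_eq_mul, sgn,
    Matrix.one_apply, Matrix.transpose_apply]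
  norm_num [Matrix.vecHead, Matrix.vecTail, Fin.ext_iff] <;> simp [Fin.ext_iff] <;> norm_num

lemma MA_c30 : MA * KK 3 0 * MA = sgn false • KK 3 2 := by
  rw [KK30, KK32]
  rw [← Matrix.ext_iff]
  simp only [Fin.forall_fin_succ, Fin.forall_fin_one, Matrix.mul_apply, Fin.sum_univ_succ,
    Finset.univ_eq_empty, Finset.sum_empty, Matrix.cons_val_zero, Matrix.cons_val_succ,
    Matrix.smul_apply, MA, MB, NC, Matrix.cons_val', Matrix.vecHead, Matrix.vecTail,
    Function.comp, Matrix.cons_val_fin_one, Fin.succ_zero_eq_one, smul_eq_mul, sgn,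
    Matrix.one_apply, Matrix.transpose_apply]
  norm_num [Matrix.vecHead, Matrix.vecTail, Fin.ext_iff] <;> simp [Fin.ext_iff] <;> norm_num

lemma MA_c01 : MA * KK 0 1 * MA = sgn false • KK 1 1 := by
  rw [KK01, KK11]
  rw [← Matrix.ext_iff]
  simp only [Fin.forall_fin_succ, Fin.forall_fin_one, Matrix.mul_apply, Fin.sum_univ_succ,
    Finset.univ_eq_empty, Finset.sum_empty, Matrix.cons_val_zero, Matrix.cons_val_succ,
    Matrix.smul_apply, MA, MB, NC, Matrix.cons_val', Matrix.vecHead, Matrix.vecTail,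
    Function.comp, Matrix.cons_val_fin_one, Fin.succ_zero_eq_one, smul_eq_mul, sgn,
    Matrix.one_apply, Matrix.transpose_apply]
  norm_num [Matrix.vecHead, Matrix.vecTail, Fin.ext_iff] <;> simp [Fin.ext_iff] <;> norm_num

lemma MA_c02 : MA * KK 0 2 * MA = sgn false • KK 0 2 := by
  rw [KK02]
  rw [← Matrix.ext_iff]
  simp only [Fin.forall_fin_succ, Fin.forall_fin_one, Matrix.mul_apply, Fin.sum_univ_succ,
    Finset.univ_eq_empty, Finset.sum_empty, Matrix.cons_val_zero, Matrix.cons_val_succ,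
    Matrix.smul_apply, MA, MB, NC, Matrix.cons_val', Matrix.vecHead, Matrix.vecTail,
    Function.comp, Matrix.cons_val_fin_one, Fin.succ_zero_eq_one, smul_eq_mul, sgn,
    Matrix.one_apply, Matrix.transpose_apply]
  norm_num [Matrix.vecHead, Matrix.vecTail, Fin.ext_iff] <;> simp [Fin.ext_iff] <;> norm_num

lemma MA_c03 : MA * KK 0 3 * MA = sgn false • KK 1 3 := by
  rw [KK03, KK13]
  rw [← Matrix.ext_iff]
  simp only [Fin.forall_fin_succ, Fin.forall_fin_one, Matrix.mul_apply, Fin.sum_univ_succ,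
    Finset.univ_eq_empty, Finset.sum_empty, Matrix.cons_val_zero, Matrix.cons_val_succ,
    Matrix.smul_apply, MA, MB, NC, Matrix.cons_val', Matrix.vecHead, Matrix.vecTail,
    Function.comp, Matrix.cons_val_fin_one, Fin.succ_zero_eq_one, smul_eq_mul, sgn,
    Matrix.one_apply, Matrix.transpose_apply]
  norm_num [Matrix.vecHead, Matrix.vecTail, Fin.ext_iff] <;> simp [Fin.ext_iff] <;> norm_num

lemma MA_c33 : MA * KK 3 3 * MA = sgn false • KK 2 1 := by
  rw [KK33, KK21]
  rw [← Matrix.ext_iff]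
  simp only [Fin.forall_fin_succ, Fin.forall_fin_one, Matrix.mul_apply, Fin.sum_univ_succ,
    Finset.univ_eq_empty, Finset.sum_empty, Matrix.cons_val_zero, Matrix.cons_val_succ,
    Matrix.smul_apply, MA, MB, NC, Matrix.cons_val', Matrix.vecHead, Matrix.vecTail,
    Function.comp, Matrix.cons_val_fin_one, Fin.succ_zero_eq_one, smul_eq_mul, sgn,
    Matrix.one_apply, Matrix.transpose_apply]
  norm_num [Matrix.vecHead, Matrix.vecTail, Fin.ext_iff] <;> simp [Fin.ext_iff] <;> norm_num

lemma MA_c11 : MA * KK 1 1 * MA = sgn false • KK 0 1 := by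
  rw [KK11, KK01]
  rw [← Matrix.ext_iff]
  simp only [Fin.forall_fin_succ, Fin.forall_fin_one, Matrix.mul_apply, Fin.sum_univ_succ,
    Finset.univ_eq_empty, Finset.sum_empty, Matrix.cons_val_zero, Matrix.cons_val_succ,
    Matrix.smul_apply, MA, MB, NC, Matrix.cons_val', Matrix.vecHead, Matrix.vecTail,
    Function.comp, Matrix.cons_val_fin_one, Fin.succ_zero_eq_one, smul_eq_mul, sgn,
    Matrix.one_apply, Matrix.transpose_apply]
  norm_num [Matrix.vecHead, Matrix.vecTail, Fin.ext_iff] <;> simp [Fin.ext_iff] <;> norm_num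

lemma MA_c22 : MA * KK 2 2 * MA = sgn false • KK 2 0 := by
  rw [KK22, KK20]
  rw [← Matrix.ext_iff]
  simp only [Fin.forall_fin_succ, Fin.forall_fin_one, Matrix.mul_apply, Fin.sum_univ_succ,
    Finset.univ_eq_empty, Finset.sum_empty, Matrix.cons_val_zero, Matrix.cons_val_succ,
    Matrix.smul_apply, MA, MB, NC, Matrix.cons_val', Matrix.vecHead, Matrix.vecTail,
    Function.comp, Matrix.cons_val_fin_one, Fin.succ_zero_eq_one, smul_eq_mul, sgn,
    Matrix.one_apply, Matrix.transpose_apply]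
  norm_num [Matrix.vecHead, Matrix.vecTail, Fin.ext_iff] <;> simp [Fin.ext_iff] <;> norm_num

lemma MA_c32 : MA * KK 3 2 * MA = sgn false • KK 3 0 := by
  rw [KK32, KK30]
  rw [← Matrix.ext_iff]
  simp only [Fin.forall_fin_succ, Fin.forall_fin_one, Matrix.mul_apply, Fin.sum_univ_succ,
    Finset.univ_eq_empty, Finset.sum_empty, Matrix.cons_val_zero, Matrix.cons_val_succ,
    Matrix.smul_apply, MA, MB, NC, Matrix.cons_val', Matrix.vecHead, Matrix.vecTail,
    Function.comp, Matrix.cons_val_fin_one, Fin.succ_zero_eq_one, smul_eq_mul, sgn,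
    Matrix.one_apply, Matrix.transpose_apply]
  norm_num [Matrix.vecHead, Matrix.vecTail, Fin.ext_iff] <;> simp [Fin.ext_iff] <;> norm_num

lemma MA_c21 : MA * KK 2 1 * MA = sgn false • KK 3 3 := by
  rw [KK21, KK33]
  rw [← Matrix.ext_iff]
  simp only [Fin.forall_fin_succ, Fin.forall_fin_one, Matrix.mul_apply, Fin.sum_univ_succ,
    Finset.univ_eq_empty, Finset.sum_empty, Matrix.cons_val_zero, Matrix.cons_val_succ,
    Matrix.smul_apply, MA, MB, NC, Matrix.cons_val', Matrix.vecHead, Matrix.vecTail,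
    Function.comp, Matrix.cons_val_fin_one, Fin.succ_zero_eq_one, smul_eq_mul, sgn,
    Matrix.one_apply, Matrix.transpose_apply]
  norm_num [Matrix.vecHead, Matrix.vecTail, Fin.ext_iff] <;> simp [Fin.ext_iff] <;> norm_num

lemma MB_c10 : MB * KK 1 0 * MB = sgn false • KK 1 2 := by
  rw [KK10, KK12]
  rw [← Matrix.ext_iff]
  simp only [Fin.forall_fin_succ, Fin.forall_fin_one, Matrix.mul_apply, Fin.sum_univ_succ,
    Finset.univ_eq_empty, Finset.sum_empty, Matrix.cons_val_zero, Matrix.cons_val_succ,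
    Matrix.smul_apply, MA, MB, NC, Matrix.cons_val', Matrix.vecHead, Matrix.vecTail,
    Function.comp, Matrix.cons_val_fin_one, Fin.succ_zero_eq_one, smul_eq_mul, sgn,
    Matrix.one_apply, Matrix.transpose_apply]
  norm_num [Matrix.vecHead, Matrix.vecTail, Fin.ext_iff] <;> simp [Fin.ext_iff] <;> norm_num

lemma MB_c20 : MB * KK 2 0 * MB = sgn false • KK 2 0 := by
  rw [KK20]
  rw [← Matrix.ext_iff]
  simp only [Fin.forall_fin_succ, Fin.forall_fin_one, Matrix.mul_apply, Fin.sum_univ_succ,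
    Finset.univ_eq_empty, Finset.sum_empty, Matrix.cons_val_zero, Matrix.cons_val_succ,
    Matrix.smul_apply, MA, MB, NC, Matrix.cons_val', Matrix.vecHead, Matrix.vecTail,
    Function.comp, Matrix.cons_val_fin_one, Fin.succ_zero_eq_one, smul_eq_mul, sgn,
    Matrix.one_apply, Matrix.transpose_apply]
  norm_num [Matrix.vecHead, Matrix.vecTail, Fin.ext_iff] <;> simp [Fin.ext_iff] <;> norm_num

lemma MB_c30 : MB * KK 3 0 * MB = sgn false • KK 3 2 := by
  rw [KK30, KK32]
  rw [← Matrix.ext_iff]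
  simp only [Fin.forall_fin_succ, Fin.forall_fin_one, Matrix.mul_apply, Fin.sum_univ_succ,
    Finset.univ_eq_empty, Finset.sum_empty, Matrix.cons_val_zero, Matrix.cons_val_succ,
    Matrix.smul_apply, MA, MB, NC, Matrix.cons_val', Matrix.vecHead, Matrix.vecTail,
    Function.comp, Matrix.cons_val_fin_one, Fin.succ_zero_eq_one, smul_eq_mul, sgn,
    Matrix.one_apply, Matrix.transpose_apply]
  norm_num [Matrix.vecHead, Matrix.vecTail, Fin.ext_iff] <;> simp [Fin.ext_iff] <;> norm_num

lemma MB_c01 : MB * KK 0 1 * MB = sgn false • KK 2 1 := by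
  rw [KK01, KK21]
  rw [← Matrix.ext_iff]
  simp only [Fin.forall_fin_succ, Fin.forall_fin_one, Matrix.mul_apply, Fin.sum_univ_succ,
    Finset.univ_eq_empty, Finset.sum_empty, Matrix.cons_val_zero, Matrix.cons_val_succ,
    Matrix.smul_apply, MA, MB, NC, Matrix.cons_val', Matrix.vecHead, Matrix.vecTail,
    Function.comp, Matrix.cons_val_fin_one, Fin.succ_zero_eq_one, smul_eq_mul, sgn,
    Matrix.one_apply, Matrix.transpose_apply]
  norm_num [Matrix.vecHead, Matrix.vecTail, Fin.ext_iff] <;> simp [Fin.ext_iff] <;> norm_num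

lemma MB_c02 : MB * KK 0 2 * MB = sgn false • KK 0 2 := by
  rw [KK02]
  rw [← Matrix.ext_iff]
  simp only [Fin.forall_fin_succ, Fin.forall_fin_one, Matrix.mul_apply, Fin.sum_univ_succ,
    Finset.univ_eq_empty, Finset.sum_empty, Matrix.cons_val_zero, Matrix.cons_val_succ,
    Matrix.smul_apply, MA, MB, NC, Matrix.cons_val', Matrix.vecHead, Matrix.vecTail,
    Function.comp, Matrix.cons_val_fin_one, Fin.succ_zero_eq_one, smul_eq_mul, sgn,
    Matrix.one_apply, Matrix.transpose_apply]
  norm_num [Matrix.vecHead, Matrix.vecTail, Fin.ext_iff] <;> simp [Fin.ext_iff] <;> norm_num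

lemma MB_c03 : MB * KK 0 3 * MB = sgn false • KK 2 3 := by
  rw [KK03, KK23]
  rw [← Matrix.ext_iff]
  simp only [Fin.forall_fin_succ, Fin.forall_fin_one, Matrix.mul_apply, Fin.sum_univ_succ,
    Finset.univ_eq_empty, Finset.sum_empty, Matrix.cons_val_zero, Matrix.cons_val_succ,
    Matrix.smul_apply, MA, MB, NC, Matrix.cons_val', Matrix.vecHead, Matrix.vecTail,
    Function.comp, Matrix.cons_val_fin_one, Fin.succ_zero_eq_one, smul_eq_mul, sgn,
    Matrix.one_apply, Matrix.transpose_apply]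
  norm_num [Matrix.vecHead, Matrix.vecTail, Fin.ext_iff] <;> simp [Fin.ext_iff] <;> norm_num

lemma MB_c33 : MB * KK 3 3 * MB = sgn true • KK 1 1 := by
  rw [KK33, KK11]
  rw [← Matrix.ext_iff]
  simp only [Fin.forall_fin_succ, Fin.forall_fin_one, Matrix.mul_apply, Fin.sum_univ_succ,
    Finset.univ_eq_empty, Finset.sum_empty, Matrix.cons_val_zero, Matrix.cons_val_succ,
    Matrix.smul_apply, MA, MB, NC, Matrix.cons_val', Matrix.vecHead, Matrix.vecTail,
    Function.comp, Matrix.cons_val_fin_one, Fin.succ_zero_eq_one, smul_eq_mul, sgn,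
    Matrix.one_apply, Matrix.transpose_apply]
  norm_num [Matrix.vecHead, Matrix.vecTail, Fin.ext_iff] <;> simp [Fin.ext_iff] <;> norm_num

lemma MB_c11 : MB * KK 1 1 * MB = sgn true • KK 3 3 := by
  rw [KK11, KK33]
  rw [← Matrix.ext_iff]
  simp only [Fin.forall_fin_succ, Fin.forall_fin_one, Matrix.mul_apply, Fin.sum_univ_succ,
    Finset.univ_eq_empty, Finset.sum_empty, Matrix.cons_val_zero, Matrix.cons_val_succ,
    Matrix.smul_apply, MA, MB, NC, Matrix.cons_val', Matrix.vecHead, Matrix.vecTail,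
    Function.comp, Matrix.cons_val_fin_one, Fin.succ_zero_eq_one, smul_eq_mul, sgn,
    Matrix.one_apply, Matrix.transpose_apply]
  norm_num [Matrix.vecHead, Matrix.vecTail, Fin.ext_iff] <;> simp [Fin.ext_iff] <;> norm_num

lemma MB_c22 : MB * KK 2 2 * MB = sgn false • KK 2 2 := by
  rw [KK22]
  rw [← Matrix.ext_iff]
  simp only [Fin.forall_fin_succ, Fin.forall_fin_one, Matrix.mul_apply, Fin.sum_univ_succ,
    Finset.univ_eq_empty, Finset.sum_empty, Matrix.cons_val_zero, Matrix.cons_val_succ,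
    Matrix.smul_apply, MA, MB, NC, Matrix.cons_val', Matrix.vecHead, Matrix.vecTail,
    Function.comp, Matrix.cons_val_fin_one, Fin.succ_zero_eq_one, smul_eq_mul, sgn,
    Matrix.one_apply, Matrix.transpose_apply]
  norm_num [Matrix.vecHead, Matrix.vecTail, Fin.ext_iff] <;> simp [Fin.ext_iff] <;> norm_num

lemma MB_c32 : MB * KK 3 2 * MB = sgn false • KK 3 0 := by
  rw [KK32, KK30]
  rw [← Matrix.ext_iff]
  simp only [Fin.forall_fin_succ, Fin.forall_fin_one, Matrix.mul_apply, Fin.sum_univ_succ,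
    Finset.univ_eq_empty, Finset.sum_empty, Matrix.cons_val_zero, Matrix.cons_val_succ,
    Matrix.smul_apply, MA, MB, NC, Matrix.cons_val', Matrix.vecHead, Matrix.vecTail,
    Function.comp, Matrix.cons_val_fin_one, Fin.succ_zero_eq_one, smul_eq_mul, sgn,
    Matrix.one_apply, Matrix.transpose_apply]
  norm_num [Matrix.vecHead, Matrix.vecTail, Fin.ext_iff] <;> simp [Fin.ext_iff] <;> norm_num

lemma MB_c21 : MB * KK 2 1 * MB = sgn false • KK 0 1 := by
  rw [KK21, KK01]
  rw [← Matrix.ext_iff]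
  simp only [Fin.forall_fin_succ, Fin.forall_fin_one, Matrix.mul_apply, Fin.sum_univ_succ,
    Finset.univ_eq_empty, Finset.sum_empty, Matrix.cons_val_zero, Matrix.cons_val_succ,
    Matrix.smul_apply, MA, MB, NC, Matrix.cons_val', Matrix.vecHead, Matrix.vecTail,
    Function.comp, Matrix.cons_val_fin_one, Fin.succ_zero_eq_one, smul_eq_mul, sgn,
    Matrix.one_apply, Matrix.transpose_apply]
  norm_num [Matrix.vecHead, Matrix.vecTail, Fin.ext_iff] <;> simp [Fin.ext_iff] <;> norm_num

lemma NC_c10 : NC * KK 1 0 * NC = ((4:ℝ) * sgn false) • KK 2 0 := by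
  rw [KK10, KK20]
  rw [← Matrix.ext_iff]
  simp only [Fin.forall_fin_succ, Fin.forall_fin_one, Matrix.mul_apply, Fin.sum_univ_succ,
    Finset.univ_eq_empty, Finset.sum_empty, Matrix.cons_val_zero, Matrix.cons_val_succ,
    Matrix.smul_apply, MA, MB, NC, Matrix.cons_val', Matrix.vecHead, Matrix.vecTail,
    Function.comp, Matrix.cons_val_fin_one, Fin.succ_zero_eq_one, smul_eq_mul, sgn,
    Matrix.one_apply, Matrix.transpose_apply]
  norm_num [Matrix.vecHead, Matrix.vecTail, Fin.ext_iff] <;> simp [Fin.ext_iff] <;> norm_num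

lemma MC_c10 : MC * KK 1 0 * MC = sgn false • KK 2 0 := by
  rw [MC, Matrix.smul_mul, Matrix.smul_mul, Matrix.mul_smul, smul_smul, NC_c10, smul_smul]
  norm_num [sgn]

lemma NC_c20 : NC * KK 2 0 * NC = ((4:ℝ) * sgn false) • KK 1 0 := by
  rw [KK20, KK10]
  rw [← Matrix.ext_iff]
  simp only [Fin.forall_fin_succ, Fin.forall_fin_one, Matrix.mul_apply, Fin.sum_univ_succ,
    Finset.univ_eq_empty, Finset.sum_empty, Matrix.cons_val_zero, Matrix.cons_val_succ,
    Matrix.smul_apply, MA, MB, NC, Matrix.cons_val', Matrix.vecHead, Matrix.vecTail,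
    Function.comp, Matrix.cons_val_fin_one, Fin.succ_zero_eq_one, smul_eq_mul, sgn,
    Matrix.one_apply, Matrix.transpose_apply]
  norm_num [Matrix.vecHead, Matrix.vecTail, Fin.ext_iff] <;> simp [Fin.ext_iff] <;> norm_num

lemma MC_c20 : MC * KK 2 0 * MC = sgn false • KK 1 0 := by
  rw [MC, Matrix.smul_mul, Matrix.smul_mul, Matrix.mul_smul, smul_smul, NC_c20, smul_smul]
  norm_num [sgn]

lemma NC_c30 : NC * KK 3 0 * NC = ((4:ℝ) * sgn true) • KK 3 0 := by
  rw [KK30]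
  rw [← Matrix.ext_iff]
  simp only [Fin.forall_fin_succ, Fin.forall_fin_one, Matrix.mul_apply, Fin.sum_univ_succ,
    Finset.univ_eq_empty, Finset.sum_empty, Matrix.cons_val_zero, Matrix.cons_val_succ,
    Matrix.smul_apply, MA, MB, NC, Matrix.cons_val', Matrix.vecHead, Matrix.vecTail,
    Function.comp, Matrix.cons_val_fin_one, Fin.succ_zero_eq_one, smul_eq_mul, sgn,
    Matrix.one_apply, Matrix.transpose_apply]
  norm_num [Matrix.vecHead, Matrix.vecTail, Fin.ext_iff] <;> simp [Fin.ext_iff] <;> norm_num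

lemma MC_c30 : MC * KK 3 0 * MC = sgn true • KK 3 0 := by
  rw [MC, Matrix.smul_mul, Matrix.smul_mul, Matrix.mul_smul, smul_smul, NC_c30, smul_smul]
  norm_num [sgn]

lemma NC_c01 : NC * KK 0 1 * NC = ((4:ℝ) * sgn false) • KK 0 2 := by
  rw [KK01, KK02]
  rw [← Matrix.ext_iff]
  simp only [Fin.forall_fin_succ, Fin.forall_fin_one, Matrix.mul_apply, Fin.sum_univ_succ,
    Finset.univ_eq_empty, Finset.sum_empty, Matrix.cons_val_zero, Matrix.cons_val_succ,
    Matrix.smul_apply, MA, MB, NC, Matrix.cons_val', Matrix.vecHead, Matrix.vecTail,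
    Function.comp, Matrix.cons_val_fin_one, Fin.succ_zero_eq_one, smul_eq_mul, sgn,
    Matrix.one_apply, Matrix.transpose_apply]
  norm_num [Matrix.vecHead, Matrix.vecTail, Fin.ext_iff] <;> simp [Fin.ext_iff] <;> norm_num

lemma MC_c01 : MC * KK 0 1 * MC = sgn false • KK 0 2 := by
  rw [MC, Matrix.smul_mul, Matrix.smul_mul, Matrix.mul_smul, smul_smul, NC_c01, smul_smul]
  norm_num [sgn]

lemma NC_c02 : NC * KK 0 2 * NC = ((4:ℝ) * sgn false) • KK 0 1 := by
  rw [KK02, KK01]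
  rw [← Matrix.ext_iff]
  simp only [Fin.forall_fin_succ, Fin.forall_fin_one, Matrix.mul_apply, Fin.sum_univ_succ,
    Finset.univ_eq_empty, Finset.sum_empty, Matrix.cons_val_zero, Matrix.cons_val_succ,
    Matrix.smul_apply, MA, MB, NC, Matrix.cons_val', Matrix.vecHead, Matrix.vecTail,
    Function.comp, Matrix.cons_val_fin_one, Fin.succ_zero_eq_one, smul_eq_mul, sgn,
    Matrix.one_apply, Matrix.transpose_apply]
  norm_num [Matrix.vecHead, Matrix.vecTail, Fin.ext_iff] <;> simp [Fin.ext_iff] <;> norm_num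

lemma MC_c02 : MC * KK 0 2 * MC = sgn false • KK 0 1 := by
  rw [MC, Matrix.smul_mul, Matrix.smul_mul, Matrix.mul_smul, smul_smul, NC_c02, smul_smul]
  norm_num [sgn]

lemma NC_c03 : NC * KK 0 3 * NC = ((4:ℝ) * sgn true) • KK 0 3 := by
  rw [KK03]
  rw [← Matrix.ext_iff]
  simp only [Fin.forall_fin_succ, Fin.forall_fin_one, Matrix.mul_apply, Fin.sum_univ_succ,
    Finset.univ_eq_empty, Finset.sum_empty, Matrix.cons_val_zero, Matrix.cons_val_succ,
    Matrix.smul_apply, MA, MB, NC, Matrix.cons_val', Matrix.vecHead, Matrix.vecTail,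
    Function.comp, Matrix.cons_val_fin_one, Fin.succ_zero_eq_one, smul_eq_mul, sgn,
    Matrix.one_apply, Matrix.transpose_apply]
  norm_num [Matrix.vecHead, Matrix.vecTail, Fin.ext_iff] <;> simp [Fin.ext_iff] <;> norm_num

lemma MC_c03 : MC * KK 0 3 * MC = sgn true • KK 0 3 := by
  rw [MC, Matrix.smul_mul, Matrix.smul_mul, Matrix.mul_smul, smul_smul, NC_c03, smul_smul]
  norm_num [sgn]

lemma NC_c33 : NC * KK 3 3 * NC = ((4:ℝ) * sgn false) • KK 3 3 := by
  rw [KK33]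
  rw [← Matrix.ext_iff]
  simp only [Fin.forall_fin_succ, Fin.forall_fin_one, Matrix.mul_apply, Fin.sum_univ_succ,
    Finset.univ_eq_empty, Finset.sum_empty, Matrix.cons_val_zero, Matrix.cons_val_succ,
    Matrix.smul_apply, MA, MB, NC, Matrix.cons_val', Matrix.vecHead, Matrix.vecTail,
    Function.comp, Matrix.cons_val_fin_one, Fin.succ_zero_eq_one, smul_eq_mul, sgn,
    Matrix.one_apply, Matrix.transpose_apply]
  norm_num [Matrix.vecHead, Matrix.vecTail, Fin.ext_iff] <;> simp [Fin.ext_iff] <;> norm_num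

lemma MC_c33 : MC * KK 3 3 * MC = sgn false • KK 3 3 := by
  rw [MC, Matrix.smul_mul, Matrix.smul_mul, Matrix.mul_smul, smul_smul, NC_c33, smul_smul]
  norm_num [sgn]

lemma NC_c11 : NC * KK 1 1 * NC = ((4:ℝ) * sgn false) • KK 2 2 := by
  rw [KK11, KK22]
  rw [← Matrix.ext_iff]
  simp only [Fin.forall_fin_succ, Fin.forall_fin_one, Matrix.mul_apply, Fin.sum_univ_succ,
    Finset.univ_eq_empty, Finset.sum_empty, Matrix.cons_val_zero, Matrix.cons_val_succ,
    Matrix.smul_apply, MA, MB, NC, Matrix.cons_val', Matrix.vecHead, Matrix.vecTail,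
    Function.comp, Matrix.cons_val_fin_one, Fin.succ_zero_eq_one, smul_eq_mul, sgn,
    Matrix.one_apply, Matrix.transpose_apply]
  norm_num [Matrix.vecHead, Matrix.vecTail, Fin.ext_iff] <;> simp [Fin.ext_iff] <;> norm_num

lemma MC_c11 : MC * KK 1 1 * MC = sgn false • KK 2 2 := by
  rw [MC, Matrix.smul_mul, Matrix.smul_mul, Matrix.mul_smul, smul_smul, NC_c11, smul_smul]
  norm_num [sgn]

lemma NC_c22 : NC * KK 2 2 * NC = ((4:ℝ) * sgn false) • KK 1 1 := by
  rw [KK22, KK11]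
  rw [← Matrix.ext_iff]
  simp only [Fin.forall_fin_succ, Fin.forall_fin_one, Matrix.mul_apply, Fin.sum_univ_succ,
    Finset.univ_eq_empty, Finset.sum_empty, Matrix.cons_val_zero, Matrix.cons_val_succ,
    Matrix.smul_apply, MA, MB, NC, Matrix.cons_val', Matrix.vecHead, Matrix.vecTail,
    Function.comp, Matrix.cons_val_fin_one, Fin.succ_zero_eq_one, smul_eq_mul, sgn,
    Matrix.one_apply, Matrix.transpose_apply]
  norm_num [Matrix.vecHead, Matrix.vecTail, Fin.ext_iff] <;> simp [Fin.ext_iff] <;> norm_num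

lemma MC_c22 : MC * KK 2 2 * MC = sgn false • KK 1 1 := by
  rw [MC, Matrix.smul_mul, Matrix.smul_mul, Matrix.mul_smul, smul_smul, NC_c22, smul_smul]
  norm_num [sgn]

lemma NC_c32 : NC * KK 3 2 * NC = ((4:ℝ) * sgn true) • KK 3 1 := by
  rw [KK32, KK31]
  rw [← Matrix.ext_iff]
  simp only [Fin.forall_fin_succ, Fin.forall_fin_one, Matrix.mul_apply, Fin.sum_univ_succ,
    Finset.univ_eq_empty, Finset.sum_empty, Matrix.cons_val_zero, Matrix.cons_val_succ,
    Matrix.smul_apply, MA, MB, NC, Matrix.cons_val', Matrix.vecHead, Matrix.vecTail,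
    Function.comp, Matrix.cons_val_fin_one, Fin.succ_zero_eq_one, smul_eq_mul, sgn,
    Matrix.one_apply, Matrix.transpose_apply]
  norm_num [Matrix.vecHead, Matrix.vecTail, Fin.ext_iff] <;> simp [Fin.ext_iff] <;> norm_num

lemma MC_c32 : MC * KK 3 2 * MC = sgn true • KK 3 1 := by
  rw [MC, Matrix.smul_mul, Matrix.smul_mul, Matrix.mul_smul, smul_smul, NC_c32, smul_smul]
  norm_num [sgn]

lemma NC_c21 : NC * KK 2 1 * NC = ((4:ℝ) * sgn false) • KK 1 2 := by
  rw [KK21, KK12]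
  rw [← Matrix.ext_iff]
  simp only [Fin.forall_fin_succ, Fin.forall_fin_one, Matrix.mul_apply, Fin.sum_univ_succ,
    Finset.univ_eq_empty, Finset.sum_empty, Matrix.cons_val_zero, Matrix.cons_val_succ,
    Matrix.smul_apply, MA, MB, NC, Matrix.cons_val', Matrix.vecHead, Matrix.vecTail,
    Function.comp, Matrix.cons_val_fin_one, Fin.succ_zero_eq_one, smul_eq_mul, sgn,
    Matrix.one_apply, Matrix.transpose_apply]
  norm_num [Matrix.vecHead, Matrix.vecTail, Fin.ext_iff] <;> simp [Fin.ext_iff] <;> norm_num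

lemma MC_c21 : MC * KK 2 1 * MC = sgn false • KK 1 2 := by
  rw [MC, Matrix.smul_mul, Matrix.smul_mul, Matrix.mul_smul, smul_smul, NC_c21, smul_smul]
  norm_num [sgn]

noncomputable def MAU : EMat 2 := m4 MA
lemma MAU_sq : MAU * MAU = 1 := by rw [MAU, m4_mul, MA_sq, m4_one]
lemma MAU_symm : MAUᵀ = MAU := by rw [MAU, m4_transpose, MA_symm]

lemma MA_gen1 : ∀ x : Fin 4, ∃ (s : Bool) (a b : Fin 4), MAU * k2 x 0 * MAU = sgn s • k2 a b := by
  intro x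
  fin_cases x
  · exact ⟨false, 0, 0, by show MAU * k2 0 0 * MAU = sgn false • k2 0 0; rw [k2_zero, mul_one, MAU_sq]; simp [sgn]⟩
  · exact ⟨false, 1, 0, conj_eq MA_c10⟩
  · exact ⟨false, 2, 2, conj_eq MA_c20⟩
  · exact ⟨false, 3, 2, conj_eq MA_c30⟩

lemma MA_gen2 : ∀ y : Fin 4, ∃ (s : Bool) (a b : Fin 4), MAU * k2 0 y * MAU = sgn s • k2 a b := by
  intro y
  fin_cases y
  · exact ⟨false, 0, 0, by show MAU * k2 0 0 * MAU = sgn false • k2 0 0; rw [k2_zero, mul_one, MAU_sq]; simp [sgn]⟩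
  · exact ⟨false, 1, 1, conj_eq MA_c01⟩
  · exact ⟨false, 0, 2, conj_eq MA_c02⟩
  · exact ⟨false, 1, 3, conj_eq MA_c03⟩

lemma MAU_norm : inNormE2 MAU :=
  inNorm_of MAU_symm MAU_sq (goodConj_of_gen MAU_sq MA_gen1 MA_gen2)

noncomputable def MBU : EMat 2 := m4 MB
lemma MBU_sq : MBU * MBU = 1 := by rw [MBU, m4_mul, MB_sq, m4_one]
lemma MBU_symm : MBUᵀ = MBU := by rw [MBU, m4_transpose, MB_symm]

lemma MB_gen1 : ∀ x : Fin 4, ∃ (s : Bool) (a b : Fin 4), MBU * k2 x 0 * MBU = sgn s • k2 a b := by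
  intro x
  fin_cases x
  · exact ⟨false, 0, 0, by show MBU * k2 0 0 * MBU = sgn false • k2 0 0; rw [k2_zero, mul_one, MBU_sq]; simp [sgn]⟩
  · exact ⟨false, 1, 2, conj_eq MB_c10⟩
  · exact ⟨false, 2, 0, conj_eq MB_c20⟩
  · exact ⟨false, 3, 2, conj_eq MB_c30⟩

lemma MB_gen2 : ∀ y : Fin 4, ∃ (s : Bool) (a b : Fin 4), MBU * k2 0 y * MBU = sgn s • k2 a b := by
  intro y
  fin_cases y
  · exact ⟨false, 0, 0, by show MBU * k2 0 0 * MBU = sgn false • k2 0 0; rw [k2_zero, mul_one, MBU_sq]; simp [sgn]⟩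
  · exact ⟨false, 2, 1, conj_eq MB_c01⟩
  · exact ⟨false, 0, 2, conj_eq MB_c02⟩
  · exact ⟨false, 2, 3, conj_eq MB_c03⟩

lemma MBU_norm : inNormE2 MBU :=
  inNorm_of MBU_symm MBU_sq (goodConj_of_gen MBU_sq MB_gen1 MB_gen2)

noncomputable def MCU : EMat 2 := m4 MC
lemma MCU_sq : MCU * MCU = 1 := by rw [MCU, m4_mul, MC_sq, m4_one]
lemma MCU_symm : MCUᵀ = MCU := by rw [MCU, m4_transpose, MC_symm]

lemma MC_gen1 : ∀ x : Fin 4, ∃ (s : Bool) (a b : Fin 4), MCU * k2 x 0 * MCU = sgn s • k2 a b := by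
  intro x
  fin_cases x
  · exact ⟨false, 0, 0, by show MCU * k2 0 0 * MCU = sgn false • k2 0 0; rw [k2_zero, mul_one, MCU_sq]; simp [sgn]⟩
  · exact ⟨false, 2, 0, conj_eq MC_c10⟩
  · exact ⟨false, 1, 0, conj_eq MC_c20⟩
  · exact ⟨true, 3, 0, conj_eq MC_c30⟩

lemma MC_gen2 : ∀ y : Fin 4, ∃ (s : Bool) (a b : Fin 4), MCU * k2 0 y * MCU = sgn s • k2 a b := by
  intro y
  fin_cases y
  · exact ⟨false, 0, 0, by show MCU * k2 0 0 * MCU = sgn false • k2 0 0; rw [k2_zero, mul_one, MCU_sq]; simp [sgn]⟩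
  · exact ⟨false, 0, 2, conj_eq MC_c01⟩
  · exact ⟨false, 0, 1, conj_eq MC_c02⟩
  · exact ⟨true, 0, 3, conj_eq MC_c03⟩

lemma MCU_norm : inNormE2 MCU :=
  inNorm_of MCU_symm MCU_sq (goodConj_of_gen MCU_sq MC_gen1 MC_gen2)

lemma MAU_main33 : MAUᵀ * k2 3 3 * MAU = k2 2 1 := by
  rw [MAU_symm]
  have h := conj_eq MA_c33
  rw [← MAU] at h
  rw [h]
  simp [sgn]

lemma MAU_main11 : MAUᵀ * k2 1 1 * MAU = k2 0 1 := by
  rw [MAU_symm]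
  have h := conj_eq MA_c11
  rw [← MAU] at h
  rw [h]
  simp [sgn]

lemma MBU_main21 : MBUᵀ * k2 2 1 * MBU = k2 0 1 := by
  rw [MBU_symm]
  have h := conj_eq MB_c21
  rw [← MBU] at h
  rw [h]
  simp [sgn]

lemma MAU_main22 : MAUᵀ * k2 2 2 * MAU = k2 2 0 := by
  rw [MAU_symm]
  have h := conj_eq MA_c22
  rw [← MAU] at h
  rw [h]
  simp [sgn]

lemma MCU_main10 : MCUᵀ * k2 1 0 * MCU = k2 2 0 := by
  rw [MCU_symm]
  have h := conj_eq MC_c10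
  rw [← MCU] at h
  rw [h]
  simp [sgn]

lemma MCU_main11 : MCUᵀ * k2 1 1 * MCU = k2 2 2 := by
  rw [MCU_symm]
  have h := conj_eq MC_c11
  rw [← MCU] at h
  rw [h]
  simp [sgn]

lemma MAU_main32 : MAUᵀ * k2 3 2 * MAU = k2 3 0 := by
  rw [MAU_symm]
  have h := conj_eq MA_c32
  rw [← MAU] at h
  rw [h]
  simp [sgn]

end Esp2Aux

open Esp2Aux in
/-- There exist orthogonal matrices `U₁, …, U₆` normalizing `E(2)` realizing the conjugations
`σ₃⊗σ₃ ∼ σ₂⊗σ₁`, `σ₁⊗σ₁ ∼ 1₂⊗σ₁`, `σ₂⊗σ₁ ∼ 1₂⊗σ₁`, `σ₂⊗σ₂ ∼ σ₂⊗1₂`,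
`σ₁⊗1₂ ∼ σ₂⊗1₂` together with `σ₁⊗σ₁ ∼ σ₂⊗σ₂`, and `σ₃⊗σ₂ ∼ σ₃⊗1₂`. -/
theorem esp2_conjugations :
    ∃ U₁ U₂ U₃ U₄ U₅ U₆ : EMat 2,
      inNormE2 U₁ ∧ inNormE2 U₂ ∧ inNormE2 U₃ ∧ inNormE2 U₄ ∧ inNormE2 U₅ ∧ inNormE2 U₆ ∧
      U₁ᵀ * k2 3 3 * U₁ = k2 2 1 ∧
      U₂ᵀ * k2 1 1 * U₂ = k2 0 1 ∧
      U₃ᵀ * k2 2 1 * U₃ = k2 0 1 ∧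
      U₄ᵀ * k2 2 2 * U₄ = k2 2 0 ∧
      (U₅ᵀ * k2 1 0 * U₅ = k2 2 0 ∧ U₅ᵀ * k2 1 1 * U₅ = k2 2 2) ∧
      U₆ᵀ * k2 3 2 * U₆ = k2 3 0 :=
  ⟨MAU, MAU, MBU, MAU, MCU, MAU,
   MAU_norm, MAU_norm, MBU_norm, MAU_norm, MCU_norm, MAU_norm,
   MAU_main33, MAU_main11, MBU_main21, MAU_main22, ⟨MCU_main10, MCU_main11⟩, MAU_main32⟩
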